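/- Let φ = (1+√5)/2, γ = 1/φ, L(n) = ⌊nφ⌋, U(n) = ⌊nφ²⌋, and let W be the Wythoff swap sequence. Then for all n ≥ 1, W(U(n)) = ⌊γ·U(n)⌋ and W(L(n)) = ⌊φ·L(n)⌋ + 1; equivalently, ⌊nφ⌋ = ⌊γ⌊nφ²⌋⌋ and ⌊nφ²⌋ = ⌊φ⌊nφ⌋⌋ + 1 for all n ≥ 1. -/

import Mathlib

/-- The two lines of the scatterplot of the Wythoff swap sequence `W`:
for all `n ≥ 1`, `W(U(n)) = ⌊γ·U(n)⌋` and `W(L(n)) = ⌊φ·L(n)⌋ + 1`;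
equivalently, `⌊nφ⌋ = ⌊γ⌊nφ²⌋⌋` and `⌊nφ²⌋ = ⌊φ⌊nφ⌋⌋ + 1`. -/
theorem wythoff_swap_scatterplot_lines
    (φ γ : ℝ) (hφ : φ = (1 + Real.sqrt 5) / 2) (hγ : γ = 1 / φ)
    (L U : ℕ → ℕ)
    (hL : ∀ n : ℕ, L n = ⌊(n : ℝ) * φ⌋₊)
    (hU : ∀ n : ℕ, U n = ⌊(n : ℝ) * φ ^ 2⌋₊)
    (W : ℕ → ℕ) (hW0 : W 0 = 0)
    (hWL : ∀ k : ℕ, 1 ≤ k → W (L k) = U k)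
    (hWU : ∀ k : ℕ, 1 ≤ k → W (U k) = L k) :
    ∀ n : ℕ, 1 ≤ n →
      (W (U n) = ⌊γ * (U n : ℝ)⌋₊ ∧ W (L n) = ⌊φ * (L n : ℝ)⌋₊ + 1) ∧
      (⌊(n : ℝ) * φ⌋₊ = ⌊γ * (⌊(n : ℝ) * φ ^ 2⌋₊ : ℝ)⌋₊ ∧
       ⌊(n : ℝ) * φ ^ 2⌋₊ = ⌊φ * (⌊(n : ℝ) * φ⌋₊ : ℝ)⌋₊ + 1) := by
  intro n hn
  have h5 : Real.sqrt 5 ^ 2 = 5 := Real.sq_sqrt (by norm_num)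
  have hs5 : 2 < Real.sqrt 5 := by nlinarith [Real.sqrt_nonneg 5]
  have hs5' : Real.sqrt 5 < 3 := by nlinarith [Real.sqrt_nonneg 5]
  have hφ1 : 1 < φ := by rw [hφ]; linarith
  have hφ0 : 0 < φ := by linarith
  have hsq : φ ^ 2 = φ + 1 := by rw [hφ]; nlinarith
  have hγeq : γ = φ - 1 := by
    rw [hγ]
    rw [div_eq_iff (by linarith)]
    nlinarith
  have hγ0 : 0 < γ := by rw [hγeq]; rw [hφ]; linarith
  have hγ1 : γ < 1 := by rw [hγeq]; rw [hφ]; linarith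
  -- irrationality of n*φ
  have hirrφ : Irrational φ := by
    rw [hφ]
    have h5i : Irrational (Real.sqrt 5) := Nat.Prime.irrational_sqrt (by norm_num)
    have h1 : Irrational (1 + Real.sqrt 5) := by simpa using h5i.natCast_add 1
    simpa using h1.div_natCast (by norm_num : (2:ℕ) ≠ 0)
  have hirrx : Irrational ((n : ℝ) * φ) := hirrφ.natCast_mul (by omega)
  set x : ℝ := (n : ℝ) * φ with hxdef
  set a : ℕ := ⌊x⌋₊ with hadef
  have hx0 : 0 ≤ x := by positivity
  have hfl : (a : ℝ) ≤ x := Nat.floor_le hx0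
  have hlt : x < (a : ℝ) + 1 := Nat.lt_floor_add_one x
  have hf0 : 0 < x - a := by
    rcases lt_or_eq_of_le hfl with h | h
    · linarith
    · exact absurd h.symm (hirrx.ne_nat a)
  have hf1 : x - a < 1 := by linarith
  -- U n = a + n
  have hUeq : ⌊(n : ℝ) * φ ^ 2⌋₊ = a + n := by
    have : (n : ℝ) * φ ^ 2 = x + n := by rw [hxdef, hsq]; ring
    rw [this, Nat.floor_add_natCast hx0]
  -- key floor 1 : ⌊γ * (a + n)⌋₊ = a
  have key1 : ⌊γ * (((a + n : ℕ)) : ℝ)⌋₊ = a := by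
    have he : γ * (((a + n : ℕ)) : ℝ) = a + (x - a) * (1 - γ) := by
      push_cast
      rw [hγeq, hxdef]
      linear_combination (n : ℝ) * hsq
    have hq1 : 0 < (x - a) * (1 - γ) := mul_pos hf0 (by linarith)
    have hq2 : (x - a) * (1 - γ) < 1 := by nlinarith
    have ha0 : (0:ℝ) ≤ (a:ℝ) := Nat.cast_nonneg a
    rw [he]
    rw [Nat.floor_eq_iff (by linarith)]
    constructor
    · linarith
    · linarith
  -- key floor 2 : ⌊φ * a⌋₊ + 1 = a + n
  have key2 : ⌊φ * (a : ℝ)⌋₊ + 1 = a + n := by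
    have he : φ * (a : ℝ) = (((a + n : ℕ)) : ℝ) - (x - a) * γ := by
      push_cast
      rw [hγeq, hxdef]
      linear_combination (n : ℝ) * hsq
    obtain ⟨m, hm⟩ : ∃ m, a + n = m + 1 := ⟨a + n - 1, by omega⟩
    have hfloor : ⌊φ * (a : ℝ)⌋₊ = m := by
      have hp1 : 0 < (x - a) * γ := mul_pos hf0 hγ0
      rw [Nat.floor_eq_iff (by positivity)]
      have hcast : (((a + n : ℕ)) : ℝ) = (m : ℝ) + 1 := by
        rw [hm]; push_cast; ring
      have hp1 : 0 < (x - a) * γ := mul_pos hf0 hγ0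
      have hp2 : (x - a) * γ < 1 := by nlinarith
      rw [he, hcast]
      constructor
      · linarith
      · linarith
    omega
  have hLn : L n = a := by rw [hL n]
  have hUn : U n = a + n := by rw [hU n, hUeq]
  refine ⟨⟨?_, ?_⟩, ?_, ?_⟩
  · rw [hWU n hn, hLn, hUn, key1]
  · rw [hWL n hn, hUn, hLn, key2]
  · rw [hUeq, key1]
  · rw [hUeq, ← key2]
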